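/- The Faber–Zagier series satisfy A(z)·B(−z) + A(−z)·B(z) = 2 as formal power series in Q[[z]]. -/

import Mathlib

/-- The Faber–Zagier series `A(z) = Σ (6i)!/((3i)!(2i)!) (−z)^i/1728^i`. -/
noncomputable def FZA : PowerSeries ℚ :=
  PowerSeries.mk fun i =>
    ((6 * i).factorial : ℚ) / ((3 * i).factorial * (2 * i).factorial) * (-1) ^ i / 1728 ^ i

/-- The Faber–Zagier series
`B(z) = Σ (6i)!/((3i)!(2i)!) · (1+6i)/(1−6i) · (−z)^i/1728^i`. -/
noncomputable def FZB : PowerSeries ℚ :=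
  PowerSeries.mk fun i =>
    ((6 * i).factorial : ℚ) / ((3 * i).factorial * (2 * i).factorial)
      * ((1 + 6 * (i : ℚ)) / (1 - 6 * (i : ℚ))) * (-1) ^ i / 1728 ^ i

namespace FZaux

open PowerSeries

/-- The coefficients of `FZA`. -/
noncomputable def aQ (i : ℕ) : ℚ :=
  ((6 * i).factorial : ℚ) / ((3 * i).factorial * (2 * i).factorial) * (-1) ^ i / 1728 ^ i

/-- The coefficients of `FZB`. -/
noncomputable def bQ (i : ℕ) : ℚ :=
  ((6 * i).factorial : ℚ) / ((3 * i).factorial * (2 * i).factorial)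
      * ((1 + 6 * (i : ℚ)) / (1 - 6 * (i : ℚ))) * (-1) ^ i / 1728 ^ i

lemma coeff_FZA (n : ℕ) : PowerSeries.coeff (R := ℚ) n FZA = aQ n := by
  simp [FZA, aQ]

lemma coeff_FZB (n : ℕ) : PowerSeries.coeff (R := ℚ) n FZB = bQ n := by
  simp [FZB, bQ]

lemma fact_ne (n : ℕ) : ((n.factorial : ℚ)) ≠ 0 := by
  exact_mod_cast Nat.factorial_ne_zero n

lemma one_sub_ne (i : ℕ) : (1 : ℚ) - 6 * (i : ℚ) ≠ 0 := by
  intro h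
  have h1 : ((6 * i : ℕ) : ℚ) = (1 : ℚ) := by push_cast; linarith
  have h2 : 6 * i = 1 := by exact_mod_cast h1
  omega

lemma bQ_eq (i : ℕ) : bQ i = aQ i * ((1 + 6 * (i : ℚ)) / (1 - 6 * (i : ℚ))) := by
  unfold aQ bQ; ring

lemma aQ_ne (i : ℕ) : aQ i ≠ 0 := by
  unfold aQ
  have h1 := fact_ne (6 * i)
  have h2 := fact_ne (3 * i)
  have h3 := fact_ne (2 * i)
  have h4 : ((-1 : ℚ)) ^ i ≠ 0 := pow_ne_zero _ (by norm_num)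
  have h5 : ((1728 : ℚ)) ^ i ≠ 0 := pow_ne_zero _ (by norm_num)
  positivity

lemma aQ_succ (m : ℕ) :
    aQ (m + 1) = (-(6 * (m : ℚ) + 1) * (6 * (m : ℚ) + 5)) / (144 * ((m : ℚ) + 1)) * aQ m := by
  unfold aQ
  have h6 : 6 * (m + 1) = 6 * m + 1 + 1 + 1 + 1 + 1 + 1 := by omega
  have h3 : 3 * (m + 1) = 3 * m + 1 + 1 + 1 := by omega
  have h2 : 2 * (m + 1) = 2 * m + 1 + 1 := by omega
  rw [h6, h3, h2]
  simp only [Nat.factorial_succ, pow_succ]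
  push_cast
  have hm1 : ((m : ℚ) + 1) ≠ 0 := by positivity
  field_simp
  ring

lemma keyA (m : ℕ) :
    12 * bQ (m + 1) = 12 * aQ (m + 1) + (1 + 6 * (m : ℚ)) * aQ m := by
  rw [bQ_eq, aQ_succ]
  have h1 : (1 : ℚ) - 6 * ((m : ℕ) + 1 : ℕ) ≠ 0 := one_sub_ne (m + 1)
  have h1' : (1 : ℚ) - 6 * ((m : ℚ) + 1) ≠ 0 := by push_cast at h1 ⊢; exact h1
  have hm1 : ((m : ℚ) + 1) ≠ 0 := by positivity
  push_cast
  field_simp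
  ring

lemma keyB (m : ℕ) :
    12 * aQ (m + 1) = 12 * bQ (m + 1) + (6 * (m : ℚ) - 1) * bQ m := by
  rw [bQ_eq, bQ_eq, aQ_succ]
  have h1 : (1 : ℚ) - 6 * ((m : ℕ) + 1 : ℕ) ≠ 0 := one_sub_ne (m + 1)
  have h1' : (1 : ℚ) - 6 * ((m : ℚ) + 1) ≠ 0 := by push_cast at h1 ⊢; exact h1
  have h0 : (1 : ℚ) - 6 * (m : ℚ) ≠ 0 := one_sub_ne m
  have hm1 : ((m : ℚ) + 1) ≠ 0 := by positivity
  push_cast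
  field_simp
  ring

/-- `6 z² A' = 12 B − 12 A − z A`. -/
lemma relA : PowerSeries.C (R := ℚ) 6 * (PowerSeries.X ^ 2 * d⁄dX ℚ FZA)
    = PowerSeries.C (R := ℚ) 12 * FZB - PowerSeries.C (R := ℚ) 12 * FZA - PowerSeries.X * FZA := by
  ext n
  match n with
  | 0 =>
    simp only [map_sub, coeff_C_mul, PowerSeries.coeff_zero_eq_constantCoeff, map_mul,
      constantCoeff_X, zero_mul, mul_zero]
    have hA := coeff_FZA 0
    have hB := coeff_FZB 0
    rw [PowerSeries.coeff_zero_eq_constantCoeff] at hA hB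
    rw [hA, hB]
    unfold aQ bQ
    norm_num
  | 1 =>
    simp only [map_sub, coeff_C_mul, PowerSeries.coeff_X_pow_mul']
    norm_num
    rw [← PowerSeries.coeff_zero_eq_constantCoeff_apply, coeff_FZA, coeff_FZA, coeff_FZB]
    have := keyA 0
    norm_num at this
    linarith [this]
  | (n + 2) =>
    have e2 : PowerSeries.coeff (R := ℚ) (n + 2) (PowerSeries.X ^ 2 * d⁄dX ℚ FZA)
        = PowerSeries.coeff (R := ℚ) n (d⁄dX ℚ FZA) := PowerSeries.coeff_X_pow_mul _ 2 n
    have e1 : PowerSeries.coeff (R := ℚ) (n + 2) (PowerSeries.X * FZA)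
        = PowerSeries.coeff (R := ℚ) (n + 1) FZA := by
      exact PowerSeries.coeff_succ_X_mul (n + 1) FZA
    simp only [map_sub, coeff_C_mul, e2, e1, PowerSeries.coeff_derivative,
      coeff_FZA, coeff_FZB]
    have := keyA (n + 1)
    push_cast at this ⊢
    linarith [this]

/-- `6 z² B' = 12 A − 12 B + z B`. -/
lemma relB : PowerSeries.C (R := ℚ) 6 * (PowerSeries.X ^ 2 * d⁄dX ℚ FZB)
    = PowerSeries.C (R := ℚ) 12 * FZA - PowerSeries.C (R := ℚ) 12 * FZB + PowerSeries.X * FZB := by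
  ext n
  match n with
  | 0 =>
    simp only [map_add, map_sub, coeff_C_mul, PowerSeries.coeff_zero_eq_constantCoeff, map_mul,
      constantCoeff_X, zero_mul, mul_zero]
    have hA := coeff_FZA 0
    have hB := coeff_FZB 0
    rw [PowerSeries.coeff_zero_eq_constantCoeff] at hA hB
    rw [hA, hB]
    unfold aQ bQ
    norm_num
  | 1 =>
    simp only [map_add, map_sub, coeff_C_mul, PowerSeries.coeff_X_pow_mul']
    norm_num
    rw [← PowerSeries.coeff_zero_eq_constantCoeff_apply, coeff_FZA, coeff_FZB, coeff_FZB]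
    have := keyB 0
    norm_num at this
    linarith [this]
  | (n + 2) =>
    have e2 : PowerSeries.coeff (R := ℚ) (n + 2) (PowerSeries.X ^ 2 * d⁄dX ℚ FZB)
        = PowerSeries.coeff (R := ℚ) n (d⁄dX ℚ FZB) := PowerSeries.coeff_X_pow_mul _ 2 n
    have e1 : PowerSeries.coeff (R := ℚ) (n + 2) (PowerSeries.X * FZB)
        = PowerSeries.coeff (R := ℚ) (n + 1) FZB := by
      exact PowerSeries.coeff_succ_X_mul (n + 1) FZB
    simp only [map_add, map_sub, coeff_C_mul, e2, e1, PowerSeries.coeff_derivative,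
      coeff_FZA, coeff_FZB]
    have := keyB (n + 1)
    push_cast at this ⊢
    linarith [this]

lemma rescale_C' (r : ℚ) : PowerSeries.rescale (-1 : ℚ) (PowerSeries.C (R := ℚ) r)
    = PowerSeries.C (R := ℚ) r := by
  ext n
  rw [PowerSeries.coeff_rescale]
  rcases n with _ | n
  · simp
  · simp [PowerSeries.coeff_C]

lemma rescale_deriv (f : PowerSeries ℚ) :
    d⁄dX ℚ (PowerSeries.rescale (-1 : ℚ) f)
      = - PowerSeries.rescale (-1 : ℚ) (d⁄dX ℚ f) := by
  ext n
  rw [PowerSeries.coeff_derivative, PowerSeries.coeff_rescale, map_neg,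
    PowerSeries.coeff_rescale, PowerSeries.coeff_derivative, pow_succ]
  ring

end FZaux

open PowerSeries FZaux in
/-- The Faber–Zagier series satisfy `A(z)·B(−z) + A(−z)·B(z) = 2` in `ℚ[[z]]`. -/
theorem FZ_symplectic_identity :
    FZA * PowerSeries.rescale (-1) FZB + PowerSeries.rescale (-1) FZA * FZB = 2 := by
  set A := FZA with hA
  set B := FZB with hB
  set At := PowerSeries.rescale (-1 : ℚ) FZA with hAt
  set Bt := PowerSeries.rescale (-1 : ℚ) FZB with hBt
  set F := A * Bt + At * B with hF
  -- rescaled versions of the relations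
  have relAt : PowerSeries.C (R := ℚ) 6 * (PowerSeries.X ^ 2 * d⁄dX ℚ At)
      = PowerSeries.C (R := ℚ) 12 * At - PowerSeries.C (R := ℚ) 12 * Bt - PowerSeries.X * At := by
    have h := congrArg (PowerSeries.rescale (-1 : ℚ)) relA
    rw [map_mul, map_mul, map_sub, map_sub, map_mul, map_mul, map_mul, map_pow,
      rescale_C', rescale_C', rescale_neg_one_X] at h
    rw [← hAt, ← hBt] at h
    have hd : PowerSeries.rescale (-1 : ℚ) (d⁄dX ℚ FZA) = - d⁄dX ℚ At := by
      rw [hAt, rescale_deriv]; ring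
    rw [hd] at h
    linear_combination -h
  have relBt : PowerSeries.C (R := ℚ) 6 * (PowerSeries.X ^ 2 * d⁄dX ℚ Bt)
      = PowerSeries.C (R := ℚ) 12 * Bt - PowerSeries.C (R := ℚ) 12 * At + PowerSeries.X * Bt := by
    have h := congrArg (PowerSeries.rescale (-1 : ℚ)) relB
    rw [map_mul, map_mul, map_add, map_sub, map_mul, map_mul, map_mul, map_pow,
      rescale_C', rescale_C', rescale_neg_one_X] at h
    rw [← hAt, ← hBt] at h
    have hd : PowerSeries.rescale (-1 : ℚ) (d⁄dX ℚ FZB) = - d⁄dX ℚ Bt := by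
      rw [hBt, rescale_deriv]; ring
    rw [hd] at h
    linear_combination -h
  -- the derivative of F vanishes
  have hdF : d⁄dX ℚ F = 0 := by
    have hexp : d⁄dX ℚ F = A * d⁄dX ℚ Bt + Bt * d⁄dX ℚ A + (At * d⁄dX ℚ B + B * d⁄dX ℚ At) := by
      rw [hF]
      rw [map_add, Derivation.leibniz, Derivation.leibniz]
      simp [smul_eq_mul]
    have hzero : PowerSeries.C (R := ℚ) 6 * (PowerSeries.X ^ 2 * d⁄dX ℚ F) = 0 := by
      have : PowerSeries.C (R := ℚ) 6 * (PowerSeries.X ^ 2 * d⁄dX ℚ F)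
          = A * (PowerSeries.C (R := ℚ) 6 * (PowerSeries.X ^ 2 * d⁄dX ℚ Bt))
            + Bt * (PowerSeries.C (R := ℚ) 6 * (PowerSeries.X ^ 2 * d⁄dX ℚ A))
            + At * (PowerSeries.C (R := ℚ) 6 * (PowerSeries.X ^ 2 * d⁄dX ℚ B))
            + B * (PowerSeries.C (R := ℚ) 6 * (PowerSeries.X ^ 2 * d⁄dX ℚ At)) := by
        rw [hexp]; ring
      rw [this, relA, relB, relAt, relBt]; ring
    have hC : (PowerSeries.C (R := ℚ) 6 : PowerSeries ℚ) ≠ 0 := by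
      intro hc
      have := congrArg (PowerSeries.constantCoeff (R := ℚ)) hc
      simp at this
    have hX : (PowerSeries.X : PowerSeries ℚ) ^ 2 ≠ 0 :=
      pow_ne_zero _ PowerSeries.X_ne_zero
    have h1 : PowerSeries.X ^ 2 * d⁄dX ℚ F = 0 :=
      (mul_eq_zero.mp hzero).resolve_left hC
    exact (mul_eq_zero.mp h1).resolve_left hX
  -- conclude F = 2
  have hconst : PowerSeries.constantCoeff (R := ℚ) F = PowerSeries.constantCoeff (R := ℚ) (PowerSeries.C (R := ℚ) 2) := by
    rw [hF, map_add, map_mul, map_mul, hA, hB, hAt, hBt]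
    have c1 : PowerSeries.constantCoeff (R := ℚ) FZA = 1 := by
      rw [← PowerSeries.coeff_zero_eq_constantCoeff_apply, coeff_FZA]
      unfold aQ; norm_num
    have c2 : PowerSeries.constantCoeff (R := ℚ) FZB = 1 := by
      rw [← PowerSeries.coeff_zero_eq_constantCoeff_apply, coeff_FZB]
      unfold bQ; norm_num
    have c3 : PowerSeries.constantCoeff (R := ℚ) (PowerSeries.rescale (-1 : ℚ) FZA) = 1 := by
      rw [← PowerSeries.coeff_zero_eq_constantCoeff_apply, PowerSeries.coeff_rescale]
      rw [PowerSeries.coeff_zero_eq_constantCoeff_apply]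
      simp [c1]
    have c4 : PowerSeries.constantCoeff (R := ℚ) (PowerSeries.rescale (-1 : ℚ) FZB) = 1 := by
      rw [← PowerSeries.coeff_zero_eq_constantCoeff_apply, PowerSeries.coeff_rescale]
      rw [PowerSeries.coeff_zero_eq_constantCoeff_apply]
      simp [c2]
    rw [c1, c2, c3, c4]
    norm_num [PowerSeries.constantCoeff_C]
  have hder : d⁄dX ℚ F = d⁄dX ℚ (PowerSeries.C (R := ℚ) 2) := by
    rw [hdF, PowerSeries.derivative_C]
  have := PowerSeries.derivative.ext hder hconst
  rw [this]
  rw [map_ofNat]
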